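/- Let A ∈ ℝ^{(N+1)×(N+1)} be the upper-triangular matrix with diagonal entries −ln 2 and entries A_{k,ℓ} = −1/(ℓ−k) for ℓ > k (0-indexed). Then its matrix exponential e^A is the upper bidiagonal matrix with ½ on the diagonal, −½ on the superdiagonal, and 0 elsewhere. -/

import Mathlib

set_option maxHeartbeats 1000000
set_option synthInstance.maxHeartbeats 400000

open Matrix NormedSpace Finset

namespace Stmt8Aux

attribute [local instance] Matrix.linftyOpNormedAddCommGroup Matrix.linftyOpNormedRing
  Matrix.linftyOpNormedAlgebra

noncomputable section

variable (N : ℕ)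

def S : Matrix (Fin (N+1)) (Fin (N+1)) ℝ :=
  Matrix.of fun i j => if (j:ℕ) = (i:ℕ) + 1 then 1 else 0

lemma S_pow (m : ℕ) :
    (S N)^m = Matrix.of (fun i j : Fin (N+1) => if (j:ℕ) = (i:ℕ) + m then 1 else 0) := by
  induction m with
  | zero =>
    ext i j
    simp [Matrix.one_apply, Fin.ext_iff, eq_comm]
  | succ m ih =>
    ext i j
    rw [pow_succ, ih]
    simp only [Matrix.mul_apply, Matrix.of_apply, S, ite_mul, one_mul, zero_mul]
    by_cases h : (j:ℕ) = (i:ℕ) + m + 1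
    · have hlt : (i:ℕ) + m < N + 1 := by omega
      rw [Finset.sum_eq_single (⟨(i:ℕ)+m, hlt⟩ : Fin (N+1))]
      · have h1 : (j:ℕ) = ((⟨(i:ℕ)+m, hlt⟩ : Fin (N+1)):ℕ) + 1 := by simp; omega
        have h2 : ((⟨(i:ℕ)+m, hlt⟩ : Fin (N+1)):ℕ) = (i:ℕ) + m := rfl
        rw [if_pos h2, if_pos h1, if_pos (by omega : (j:ℕ) = (i:ℕ) + (m+1))]
      · intro b _ hb
        have hb' : (b:ℕ) ≠ (i:ℕ) + m := fun hc => hb (Fin.ext (by simpa using hc))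
        simp [hb']
      · simp
    · rw [if_neg (by omega)]
      apply Finset.sum_eq_zero
      intro l _
      by_cases hl : (l:ℕ) = (i:ℕ) + m
      · rw [if_pos hl, if_neg (by omega)]
      · rw [if_neg hl]

lemma S_nilpotent : (S N)^(N+1) = 0 := by
  rw [S_pow]
  ext i j
  simp only [Matrix.of_apply, Matrix.zero_apply]
  rw [if_neg (by omega)]


abbrev A : Subalgebra ℝ (Matrix (Fin (N+1)) (Fin (N+1)) ℝ) := Algebra.adjoin ℝ {S N}

local instance : CommRing (A N) :=
  Algebra.adjoinCommRingOfComm ℝ (by rintro a rfl b rfl; rfl)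

local instance : NormedCommRing (A N) :=
  { (inferInstance : NormedRing (A N)) with mul_comm := mul_comm }

local instance : IsScalarTower ℝ (A N) (A N) := IsScalarTower.right

local instance : SMulCommClass ℝ (A N) (A N) := Algebra.to_smulCommClass

local instance : NormedSpace ℝ (A N) :=
  (inferInstance : NormedAlgebra ℝ (A N)).toNormedSpace

local instance : CompleteSpace (A N) := by
  have : FiniteDimensional ℝ (A N) := inferInstanceAs (FiniteDimensional ℝ (A N).toSubmodule)
  have : IsUniformAddGroup (A N) := SeminormedAddCommGroup.to_isUniformAddGroup
  exact FiniteDimensional.complete ℝ _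

local instance : IsTopologicalRing (A N) := Subring.instIsTopologicalRing (A N).toSubring

def s : A N := ⟨S N, Algebra.subset_adjoin rfl⟩

lemma s_nilpotent : (s N)^(N+1) = 0 := by
  apply Subtype.ext
  show ((s N)^(N+1) : A N).val = 0
  rw [SubmonoidClass.coe_pow]
  exact S_nilpotent N


def c (x : ℝ) : A N := ∑ m ∈ Finset.Icc 1 N, (-(x^m / m)) • (s N)^m

def c' (x : ℝ) : A N := ∑ m ∈ Finset.Icc 1 N, (-(x^(m-1))) • (s N)^m

def v (x : ℝ) : A N := ∑ m ∈ Finset.range (N+1), x^m • (s N)^m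

def v' (x : ℝ) : A N := ∑ m ∈ Finset.range (N+1), ((m:ℝ) * x^(m-1)) • (s N)^m

lemma hasDerivAt_c (x : ℝ) : HasDerivAt (c N) (c' N x) x := by
  apply HasDerivAt.fun_sum
  intro m hm
  have hm1 : 1 ≤ m := (Finset.mem_Icc.mp hm).1
  have h := (((hasDerivAt_pow m x).div_const (m:ℝ)).neg).smul_const ((s N)^m)
  have hm0 : (m:ℝ) ≠ 0 := Nat.cast_ne_zero.mpr (by omega)
  convert h using 2
  · rfl
  field_simp

lemma hasDerivAt_v (x : ℝ) : HasDerivAt (v N) (v' N x) x := by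
  apply HasDerivAt.fun_sum
  intro m _
  exact (hasDerivAt_pow m x).smul_const ((s N)^m)

lemma geom (x : ℝ) : (1 - x • s N) * v N x = 1 := by
  have h : (∑ m ∈ Finset.range (N+1), (x • s N)^m) * (x • s N - 1) = (x • s N)^(N+1) - 1 :=
    geom_sum_mul _ _
  rw [smul_pow x (s N) (N+1), s_nilpotent, smul_zero, zero_sub] at h
  have : v N x = ∑ m ∈ Finset.range (N+1), (x • s N)^m := by
    unfold v; congr 1; funext m; rw [smul_pow x (s N) m]
  rw [this]
  rw [mul_comm]
  calc (∑ m ∈ Finset.range (N+1), (x • s N)^m) * (1 - x • s N)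
      = -((∑ m ∈ Finset.range (N+1), (x • s N)^m) * (x • s N - 1)) := by ring
    _ = 1 := by rw [h]; ring

lemma c'_eq (x : ℝ) : c' N x = -(s N * v N x) := by
  have h1 : s N * v N x = ∑ m ∈ Finset.range (N+1), x^m • s N ^ (m+1) := by
    unfold v; rw [Finset.mul_sum]; congr 1; funext m
    rw [mul_smul_comm, ← pow_succ']
  have h2 : ∑ m ∈ Finset.range (N+1), x^m • s N ^ (m+1)
      = ∑ m ∈ Finset.range N, x^m • s N ^ (m+1) := by
    rw [Finset.sum_range_succ, s_nilpotent, smul_zero, add_zero]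
  have h3 : c' N x = ∑ m ∈ Finset.range N, -(x^m • s N ^ (m+1)) := by
    unfold c'
    refine Finset.sum_nbij' (fun m => m - 1) (fun m => m + 1) ?_ ?_ ?_ ?_ ?_
    · intro a ha; simp only [Finset.mem_Icc] at ha; simp only [Finset.mem_range]
      show a - 1 < N; omega
    · intro a ha; simp only [Finset.mem_range] at ha; simp only [Finset.mem_Icc]
      show 1 ≤ a + 1 ∧ a + 1 ≤ N; omega
    · intro a ha; simp only [Finset.mem_Icc] at ha; show a - 1 + 1 = a; omega
    · intro a _; show a + 1 - 1 = a; omega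
    · intro a ha
      simp only [Finset.mem_Icc] at ha
      have h4 : a - 1 + 1 = a := by omega
      show -x ^ (a-1) • s N ^ a = -(x ^ (a-1) • s N ^ ((a-1)+1))
      rw [h4, neg_smul]
  rw [h3, h1, h2, ← Finset.sum_neg_distrib]


lemma v'_eq (x : ℝ) : v' N x = v N x * s N * v N x := by
  have hprod : HasDerivAt (fun y : ℝ => (1 - y • s N) * v N y)
      ((-((1:ℝ) • s N)) * v N x + (1 - x • s N) * v' N x) x := by
    have h1 : HasDerivAt (fun y : ℝ => 1 - y • s N) (-((1:ℝ) • s N)) x :=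
      ((hasDerivAt_id x).smul_const (s N)).const_sub 1
    exact h1.mul (hasDerivAt_v N x)
  have hconst : (fun y : ℝ => (1 - y • s N) * v N y) = fun _ => 1 := funext fun y => geom N y
  have h0 : (-((1:ℝ) • s N)) * v N x + (1 - x • s N) * v' N x = 0 := by
    have := hprod.unique (by rw [hconst]; exact hasDerivAt_const x 1)
    exact this
  rw [one_smul] at h0
  have hv1 : v N x * (1 - x • s N) = 1 := by rw [mul_comm]; exact geom N x
  have h2 := congrArg (fun z => v N x * z) h0
  simp only [mul_add, mul_zero] at h2
  have h3 : v N x * ((1 - x • s N) * v' N x) = (v N x * (1 - x • s N)) * v' N x := by ring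
  rw [h3, hv1, one_mul] at h2
  linear_combination h2


lemma hasDerivAt_F (x : ℝ) :
    HasDerivAt (fun y : ℝ => exp (c N y) * v N y) 0 x := by
  have hexp : HasDerivAt (fun y : ℝ => exp (c N y)) (exp (c N x) • c' N x) x := by
    have h1 := (hasFDerivAt_exp (𝕂 := ℝ) (x := c N x)).comp_hasDerivAt x (hasDerivAt_c N x)
    convert h1 using 1 <;> rfl
  have h := hexp.mul (hasDerivAt_v N x)
  convert h using 1
  · rfl
  · rfl
  · rfl
  rw [smul_eq_mul, v'_eq N x, c'_eq N x]
  ring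

lemma exp_c_one : exp (c N 1) = 1 - s N := by
  have hconst : ∀ x y : ℝ, exp (c N x) * v N x = exp (c N y) * v N y := by
    apply is_const_of_deriv_eq_zero
    · exact fun x => (hasDerivAt_F N x).differentiableAt
    · exact fun x => (hasDerivAt_F N x).deriv
  have hc0 : c N 0 = 0 := by
    unfold c
    apply Finset.sum_eq_zero
    intro m hm
    have : 1 ≤ m := (Finset.mem_Icc.mp hm).1
    rw [zero_pow (by omega), zero_div, neg_zero, zero_smul]
  have hv0 : v N 0 = 1 := by
    unfold v
    rw [Finset.sum_eq_single 0]
    · simp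
    · intro m _ hm
      rw [zero_pow hm, zero_smul]
    · simp
  have key : exp (c N 1) * v N 1 = 1 := by
    rw [hconst 1 0, hc0, exp_zero, hv0, one_mul]
  have hg : v N 1 * (1 - s N) = 1 := by
    have := geom N 1
    rw [one_smul] at this
    rw [mul_comm]; exact this
  calc exp (c N 1) = exp (c N 1) * (v N 1 * (1 - s N)) := by rw [hg, mul_one]
    _ = exp (c N 1) * v N 1 * (1 - s N) := by ring
    _ = 1 - s N := by rw [key, one_mul]


lemma exp_C_matrix :
    exp (∑ m ∈ Finset.Icc 1 N, (-(1/m : ℝ)) • (S N)^m) = 1 - S N := by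
  have hval : ((c N 1 : A N) : Matrix (Fin (N+1)) (Fin (N+1)) ℝ)
      = ∑ m ∈ Finset.Icc 1 N, (-(1/m : ℝ)) • (S N)^m := by
    unfold c
    show (A N).val (∑ m ∈ Finset.Icc 1 N, (-((1:ℝ)^m / m)) • (s N)^m) = _
    rw [map_sum]
    congr 1; funext m
    rw [_root_.map_smul, one_pow]
    rw [show (A N).val (s N ^ m) = S N ^ m from SubmonoidClass.coe_pow _ _]
  have hmap : (A N).val (exp (c N 1)) = exp ((A N).val (c N 1)) := map_exp_of_mem_ball (𝕂 := ℝ) (A N).val continuous_subtype_val (c N 1)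
    ((expSeries_radius_eq_top ℝ (A N)).symm ▸ edist_lt_top _ _)
  rw [exp_c_one] at hmap
  have hmap' : exp ((c N 1 : A N) : Matrix (Fin (N+1)) (Fin (N+1)) ℝ)
      = ((1 - s N : A N) : Matrix (Fin (N+1)) (Fin (N+1)) ℝ) := hmap.symm
  rw [← hval, hmap']
  show (A N).val (1 - s N) = _
  rw [map_sub, _root_.map_one]
  rfl

lemma A_decomp :
    (Matrix.of fun i j : Fin (N + 1) =>
        if i = j then -Real.log 2
        else if (i:ℕ) < (j:ℕ) then -1 / ((j:ℕ) - (i:ℕ) : ℝ)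
        else 0)
      = algebraMap ℝ _ (-Real.log 2) + ∑ m ∈ Finset.Icc 1 N, (-(1/m : ℝ)) • (S N)^m := by
  ext i j
  rw [Matrix.add_apply, Matrix.sum_apply]
  simp only [Matrix.of_apply, Matrix.algebraMap_matrix_apply, S_pow, Matrix.smul_apply]
  rw [show (algebraMap ℝ ℝ) (-Real.log 2) = -Real.log 2 from rfl]
  simp only [smul_eq_mul, mul_ite, mul_one, mul_zero]
  by_cases hij : i = j
  · subst hij
    rw [if_pos rfl, if_pos rfl, Finset.sum_eq_zero, add_zero]
    intro m hm
    rw [if_neg (by have := (Finset.mem_Icc.mp hm).1; omega)]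
  · rw [if_neg hij, if_neg hij, zero_add]
    by_cases hlt : (i:ℕ) < (j:ℕ)
    · rw [if_pos hlt]
      have hmem : (j:ℕ) - (i:ℕ) ∈ Finset.Icc 1 N := by
        rw [Finset.mem_Icc]; omega
      rw [Finset.sum_eq_single_of_mem _ hmem]
      · rw [if_pos (by omega)]
        rw [Nat.cast_sub (le_of_lt hlt), neg_div]
      · intro b _ hb
        rw [if_neg (by omega)]
    · rw [if_neg hlt]
      apply (Finset.sum_eq_zero _).symm
      intro m hm
      rw [if_neg (by have := (Finset.mem_Icc.mp hm).1; omega)]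


theorem main :
    exp
      (Matrix.of fun i j : Fin (N + 1) =>
        if i = j then -Real.log 2
        else if (i:ℕ) < (j:ℕ) then -1 / ((j:ℕ) - (i:ℕ) : ℝ)
        else 0) =
    Matrix.of fun i j : Fin (N + 1) =>
      if i = j then (1/2 : ℝ)
      else if (j:ℕ) = (i:ℕ) + 1 then -1/2
      else 0 := by
  rw [A_decomp]
  rw [Matrix.exp_add_of_commute _ _ (Algebra.commute_algebraMap_left _ _)]
  rw [← (show algebraMap ℝ (Matrix (Fin (N+1)) (Fin (N+1)) ℝ) (exp (-Real.log 2))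
    = exp (algebraMap ℝ (Matrix (Fin (N+1)) (Fin (N+1)) ℝ) (-Real.log 2)) from algebraMap_exp_comm (-Real.log 2)), exp_C_matrix]
  have h2 : exp (-Real.log 2) = (1/2 : ℝ) := by
    rw [← Real.exp_eq_exp_ℝ, Real.exp_neg, Real.exp_log (by norm_num : (0:ℝ) < 2)]
    norm_num
  rw [h2, ← Algebra.smul_def]
  ext i j
  rw [Matrix.smul_apply, Matrix.sub_apply, Matrix.of_apply]
  unfold S
  rw [Matrix.of_apply, Matrix.one_apply]
  by_cases hij : i = j
  · rw [if_pos hij, if_pos hij, if_neg (by omega : ¬ (j:ℕ) = (i:ℕ) + 1)]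
    norm_num
  · rw [if_neg hij, if_neg hij]
    by_cases hsucc : (j:ℕ) = (i:ℕ) + 1
    · rw [if_pos hsucc, if_pos hsucc]
      norm_num
    · rw [if_neg hsucc, if_neg hsucc]
      norm_num

end
end Stmt8Aux

theorem stmt_8 (N : ℕ) :
    NormedSpace.exp
      (Matrix.of fun i j : Fin (N + 1) =>
        if i = j then -Real.log 2
        else if (i:ℕ) < (j:ℕ) then -1 / ((j:ℕ) - (i:ℕ) : ℝ)
        else 0) =
    Matrix.of fun i j : Fin (N + 1) =>
      if i = j then (1/2 : ℝ)
      else if (j:ℕ) = (i:ℕ) + 1 then -1/2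
      else 0 :=
  Stmt8Aux.main N
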